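/- For any finite simple graph G, Tr_{d₂}(G) ≤ Δ(G)² + 1, where Δ(G) is the maximum degree of G. -/

import Mathlib

open SimpleGraph

/-- `P : Fin k → Set V` is a d₂-transitive partition of size `k` of the graph `G`:
its parts are nonempty, every vertex lies in exactly one part, and for `i < j`
every vertex of `P j` is within graph distance 2 of some vertex of `P i`. -/
def IsD2TransPartition {V : Type*} (G : SimpleGraph V) {k : ℕ} (P : Fin k → Set V) : Prop :=
  (∀ i, (P i).Nonempty) ∧ (∀ v : V, ∃! i, v ∈ P i) ∧
  ∀ i j : Fin k, i < j → ∀ b ∈ P j, ∃ a ∈ P i, G.edist a b ≤ 2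

/-- The d₂-transitivity `Tr_{d₂}(G)`: the maximum size of a d₂-transitive partition. -/
noncomputable def Trd2 {V : Type*} (G : SimpleGraph V) : ℕ :=
  sSup {k : ℕ | ∃ P : Fin k → Set V, IsD2TransPartition G P}

lemma edist_le_two_cases {V : Type*} (G : SimpleGraph V) {a b : V} (h : G.edist a b ≤ 2) :
    a = b ∨ G.Adj a b ∨ ∃ w, G.Adj a w ∧ G.Adj w b := by
  have hne : G.edist a b ≠ ⊤ := fun ht => by simp [ht] at h
  obtain ⟨p, hp⟩ := SimpleGraph.exists_walk_of_edist_ne_top hne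
  have hlen : (p.length : ℕ∞) ≤ 2 := hp ▸ h
  have hlen' : p.length ≤ 2 := by exact_mod_cast hlen
  match p with
  | SimpleGraph.Walk.nil => exact Or.inl rfl
  | SimpleGraph.Walk.cons h1 SimpleGraph.Walk.nil => exact Or.inr (Or.inl h1)
  | SimpleGraph.Walk.cons h1 (SimpleGraph.Walk.cons h2 q) =>
      have : q.length = 0 := by simp only [SimpleGraph.Walk.length_cons] at hlen'; omega
      have := SimpleGraph.Walk.eq_of_length_eq_zero this
      exact Or.inr (Or.inr ⟨_, h1, this ▸ h2⟩)

lemma ball2_card_le {V : Type*} [Fintype V] [DecidableEq V] (G : SimpleGraph V) [DecidableRel G.Adj] (b : V) :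
    (insert b ((G.neighborFinset b).biUnion
      (fun w => insert w ((G.neighborFinset w).erase b)))).card ≤ G.maxDegree ^ 2 + 1 := by
  calc (insert b ((G.neighborFinset b).biUnion
          (fun w => insert w ((G.neighborFinset w).erase b)))).card
      ≤ ((G.neighborFinset b).biUnion
          (fun w => insert w ((G.neighborFinset w).erase b))).card + 1 :=
        Finset.card_insert_le _ _
    _ ≤ (∑ w ∈ G.neighborFinset b,
          (insert w ((G.neighborFinset w).erase b)).card) + 1 := by
        gcongr; exact Finset.card_biUnion_le
    _ ≤ (∑ _w ∈ G.neighborFinset b, G.maxDegree) + 1 := by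
        gcongr with w hw
        have hb : b ∈ G.neighborFinset w := by
          rw [SimpleGraph.mem_neighborFinset] at hw ⊢
          exact hw.symm
        have h1 : ((G.neighborFinset w).erase b).card = G.degree w - 1 := by
          rw [Finset.card_erase_of_mem hb, SimpleGraph.card_neighborFinset_eq_degree]
        have hdeg : 1 ≤ G.degree w := by
          rw [← SimpleGraph.card_neighborFinset_eq_degree]
          exact Finset.card_pos.mpr ⟨b, hb⟩
        calc (insert w ((G.neighborFinset w).erase b)).card
            ≤ ((G.neighborFinset w).erase b).card + 1 := Finset.card_insert_le _ _
          _ = G.degree w := by rw [h1]; omega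
          _ ≤ G.maxDegree := G.degree_le_maxDegree w
    _ ≤ G.maxDegree * G.maxDegree + 1 := by
        rw [Finset.sum_const, smul_eq_mul]
        gcongr
        rw [SimpleGraph.card_neighborFinset_eq_degree]
        exact G.degree_le_maxDegree b
    _ = G.maxDegree ^ 2 + 1 := by ring

theorem stmt_1 {V : Type*} [Fintype V] (G : SimpleGraph V) [DecidableRel G.Adj] :
    Trd2 G ≤ G.maxDegree ^ 2 + 1 := by
  classical
  apply csSup_le'
  rintro k ⟨P, hne, huniq, htrans⟩
  rcases Nat.eq_zero_or_pos k with rfl | hk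
  · exact Nat.zero_le _
  -- last index
  set j : Fin k := ⟨k - 1, by omega⟩ with hj
  obtain ⟨b, hb⟩ := hne j
  -- choose representatives
  have hsel : ∀ i : Fin k, ∃ a, a ∈ P i ∧ G.edist a b ≤ 2 := by
    intro i
    rcases eq_or_lt_of_le (show i ≤ j by
      rcases i with ⟨i, hi⟩; simp only [hj, Fin.mk_le_mk]; omega) with heq | hlt
    · exact ⟨b, heq ▸ hb, by simp⟩
    · obtain ⟨a, ha, hd⟩ := htrans i j hlt b hb
      exact ⟨a, ha, hd⟩
  choose f hf hfd using hsel
  have hinj : Function.Injective f := by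
    intro i i' h
    obtain ⟨c, _, hc⟩ := huniq (f i)
    exact (hc i (hf i)).trans (hc i' (h ▸ hf i')).symm
  -- f maps into the ball of radius 2 around b
  have hmem : ∀ i, f i ∈ insert b ((G.neighborFinset b).biUnion
      (fun w => insert w ((G.neighborFinset w).erase b))) := by
    intro i
    rcases edist_le_two_cases G (hfd i) with heq | hadj | ⟨w, h1, h2⟩
    · exact heq ▸ Finset.mem_insert_self _ _
    · refine Finset.mem_insert_of_mem (Finset.mem_biUnion.mpr ⟨f i, ?_, ?_⟩)
      · rw [SimpleGraph.mem_neighborFinset]; exact hadj.symm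
      · exact Finset.mem_insert_self _ _
    · rcases eq_or_ne (f i) b with hfb | hfb
      · exact hfb ▸ Finset.mem_insert_self _ _
      · refine Finset.mem_insert_of_mem (Finset.mem_biUnion.mpr ⟨w, ?_, ?_⟩)
        · rw [SimpleGraph.mem_neighborFinset]; exact h2.symm
        · refine Finset.mem_insert_of_mem (Finset.mem_erase.mpr ⟨hfb, ?_⟩)
          rw [SimpleGraph.mem_neighborFinset]; exact h1.symm
  have : k ≤ (insert b ((G.neighborFinset b).biUnion
      (fun w => insert w ((G.neighborFinset w).erase b)))).card := by
    have := Finset.card_le_card_of_injOn (s := Finset.univ) f (fun i _ => hmem i)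
      (hinj.injOn)
    simpa using this
  exact this.trans (ball2_card_le G b)
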